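/- Let M ∈ SL_3(ℤ) be a matrix whose eigenvalues are α, β, β̄, where α > 1 is real and β is non-real. Let Γ be the centralizer of M in GL_3(ℤ), and let ⟨M⟩ ≅ ℤ be the (central) subgroup of Γ generated by M. Then the set of elements of finite order of the quotient group Γ/⟨M⟩ is finite. -/

import Mathlib

open Matrix Polynomial

/-- The commutant of a diagonal matrix with distinct diagonal entries is diagonal. -/
theorem diag_comm_aux {n R : Type*} [Fintype n] [DecidableEq n] [Field R] (d : n → R)
    (hd : Function.Injective d) (D : Matrix n n R)
    (h : D * Matrix.diagonal d = Matrix.diagonal d * D) :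
    D = Matrix.diagonal (fun i => D i i) := by
  ext i j
  by_cases hij : i = j
  · subst hij; simp
  · have h1 := congrFun (congrFun h i) j
    rw [Matrix.mul_apply, Matrix.mul_apply] at h1
    simp only [Matrix.diagonal, Matrix.of_apply, mul_ite, mul_zero, ite_mul, zero_mul,
      Finset.sum_ite_eq, Finset.sum_ite_eq', Finset.mem_univ, if_true] at h1
    have hne : d j - d i ≠ 0 := sub_ne_zero.mpr fun hh => hij (hd hh).symm
    have h2 : D i j * (d j - d i) = 0 := by linear_combination h1
    rw [Matrix.diagonal_apply_ne _ hij]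
    rcases mul_eq_zero.mp h2 with h3 | h3
    · exact h3
    · exact absurd h3 hne

/-- A root of the characteristic polynomial admits an eigenvector. -/
theorem exists_eigvec_aux {n : Type*} [Fintype n] [DecidableEq n] (A : Matrix n n ℂ) (c : ℂ)
    (h : A.charpoly.eval c = 0) : ∃ v ≠ 0, A *ᵥ v = c • v := by
  have hdet : (A - Matrix.diagonal (fun _ => c)).det = 0 := by
    have h2 : (Matrix.diagonal (fun _ : n => c) - A).det = 0 := by
      rw [← h, Matrix.charpoly, ← Polynomial.coe_evalRingHom, RingHom.map_det]
      congr 1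
      ext i j
      by_cases hij : i = j <;>
        simp [Matrix.charmatrix_apply, Matrix.diagonal, hij, Matrix.sub_apply]
    have h5 : A - Matrix.diagonal (fun _ : n => c) = -(Matrix.diagonal (fun _ : n => c) - A) :=
      (neg_sub _ _).symm
    rw [h5, Matrix.det_neg, h2, mul_zero]
  obtain ⟨v, hv, hmul⟩ := (Matrix.exists_mulVec_eq_zero_iff).mpr hdet
  refine ⟨v, hv, ?_⟩
  have h6 := Matrix.sub_mulVec A (Matrix.diagonal (fun _ => c)) v
  rw [hmul] at h6
  have h3 : Matrix.diagonal (fun _ : n => c) *ᵥ v = c • v := by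
    ext i; simp [Matrix.mulVec_diagonal]
  rw [h3] at h6
  linear_combination -h6

/-- key real-power computation -/
theorem key_rpow_aux {a c : ℝ} (hc : 0 < c) (ha : 0 < a) {n : ℕ} (hn : 0 < n) {k : ℤ}
    (h : a ^ n = c ^ k) (m : ℤ) : a * c ^ (-m : ℤ) = c ^ ((k : ℝ) / n - m) := by
  have h1 : a = c ^ ((k : ℝ) / n) := by
    have h2 : a ^ (n : ℝ) = c ^ ((k : ℤ) : ℝ) := by
      rw [Real.rpow_natCast, Real.rpow_intCast, h]
    have h3 := congrArg (fun x : ℝ => x ^ ((n : ℝ)⁻¹)) h2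
    rw [← Real.rpow_mul ha.le, ← Real.rpow_mul hc.le,
      mul_inv_cancel₀ (by positivity : (n : ℝ) ≠ 0), Real.rpow_one] at h3
    rw [div_eq_mul_inv]
    exact h3
  rw [h1, ← Real.rpow_intCast c (-m), ← Real.rpow_add hc]
  congr 1
  push_cast
  ring


/-- entry bound for `P * diagonal dd * Q` -/
theorem entry_bound_aux (P Q : Matrix (Fin 3) (Fin 3) ℂ) (dd : Fin 3 → ℂ) (a : ℝ)
    (ha : 0 ≤ a) (hd : ∀ l, ‖dd l‖ ≤ a) (i j : Fin 3) :
    ‖(P * Matrix.diagonal dd * Q) i j‖ ≤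
      a * ∑ i' : Fin 3, ∑ j' : Fin 3, ∑ l : Fin 3,
        ‖P i' l‖ * ‖Q l j'‖ := by
  have hexp : (P * Matrix.diagonal dd * Q) i j = ∑ l : Fin 3, P i l * dd l * Q l j := by
    rw [Matrix.mul_apply]
    congr 1
    ext l
    rw [Matrix.mul_diagonal]
  rw [hexp]
  have h9 : ∀ i' : Fin 3, (0 : ℝ) ≤ ∑ j' : Fin 3, ∑ l : Fin 3,
      ‖P i' l‖ * ‖Q l j'‖ := by
    intro i'; positivity
  have h10 : ∀ j' : Fin 3, (0 : ℝ) ≤ ∑ l : Fin 3,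
      ‖P i l‖ * ‖Q l j'‖ := by
    intro j'; positivity
  calc ‖∑ l : Fin 3, P i l * dd l * Q l j‖
      ≤ ∑ l : Fin 3, ‖P i l * dd l * Q l j‖ := norm_sum_le _ _
    _ ≤ ∑ l : Fin 3, ‖P i l‖ * a * ‖Q l j‖ := by
        apply Finset.sum_le_sum
        intro l _
        rw [norm_mul, norm_mul]
        apply mul_le_mul_of_nonneg_right _ (norm_nonneg _)
        exact mul_le_mul_of_nonneg_left (hd l) (norm_nonneg _)
    _ = a * ∑ l : Fin 3, ‖P i l‖ * ‖Q l j‖ := by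
        rw [Finset.mul_sum]; congr 1; ext l; ring
    _ ≤ a * ∑ i' : Fin 3, ∑ j' : Fin 3, ∑ l : Fin 3,
          ‖P i' l‖ * ‖Q l j'‖ := by
        apply mul_le_mul_of_nonneg_left _ ha
        calc ∑ l : Fin 3, ‖P i l‖ * ‖Q l j‖
            ≤ ∑ j' : Fin 3, ∑ l : Fin 3, ‖P i l‖ * ‖Q l j'‖ :=
              Finset.single_le_sum (fun j' _ => h10 j') (Finset.mem_univ j)
          _ ≤ ∑ i' : Fin 3, ∑ j' : Fin 3, ∑ l : Fin 3,
                ‖P i' l‖ * ‖Q l j'‖ :=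
              Finset.single_le_sum (fun i' _ => h9 i') (Finset.mem_univ i)

/-- integer entry bounded by a real number lies in an explicit interval -/
theorem int_entry_bound_aux (e : ℤ) (c : ℝ) (h : ‖(e : ℂ)‖ ≤ c) :
    e ∈ Set.Icc (-⌈c⌉) ⌈c⌉ := by
  have h13 : ‖(e : ℂ)‖ = |(e : ℝ)| := by
    rw [← Complex.ofReal_intCast, Complex.norm_real, Real.norm_eq_abs]
  rw [h13] at h
  have habs : ((|e| : ℤ) : ℝ) ≤ c := by rw [Int.cast_abs]; exact h
  have hle : |e| ≤ ⌈c⌉ := by exact_mod_cast le_trans habs (Int.le_ceil c)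
  exact Set.mem_Icc.mpr (abs_le.mp hle)

/-- The cyclic subgroup generated by `a`, viewed inside the centralizer of `a`,
is a normal subgroup of the centralizer. -/
instance zpowers_subgroupOf_centralizer_normal {Γ : Type*} [Group Γ] (a : Γ) :
    ((Subgroup.zpowers a).subgroupOf (Subgroup.centralizer {a})).Normal := by
  constructor
  intro n hn g
  rw [Subgroup.mem_subgroupOf] at hn ⊢
  obtain ⟨k, hk⟩ := Subgroup.mem_zpowers_iff.mp hn
  have hc : Commute a (g : Γ) :=
    Subgroup.mem_centralizer_iff.mp g.2 a (Set.mem_singleton a)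
  refine Subgroup.mem_zpowers_iff.mpr ⟨k, ?_⟩
  push_cast
  rw [← hk]
  rw [← (hc.zpow_left k).eq, mul_assoc, mul_inv_cancel, mul_one]

set_option maxHeartbeats 1600000 in
/-- Let `M ∈ SL₃(ℤ)` have eigenvalues `α, β, β̄` with `α > 1` real and `β` non-real.
Let `Γ` be the centralizer of `M` in `GL₃(ℤ)` and `⟨M⟩` the cyclic subgroup generated
by `M`.  Then the set of elements of finite order of the quotient `Γ/⟨M⟩` is finite. -/
theorem finite_torsion_elements_of_centralizer_quotient_SL3
    (M : Matrix (Fin 3) (Fin 3) ℤ) (hdet : M.det = 1)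
    (α : ℝ) (hα : 1 < α) (β : ℂ) (hβ : β.im ≠ 0)
    (hchar : M.charpoly.map (Int.castRingHom ℂ) =
      (X - C (α : ℂ)) * (X - C β) * (X - C ((starRingEnd ℂ) β)))
    (Mu : GL (Fin 3) ℤ) (hMu : (Mu : Matrix (Fin 3) (Fin 3) ℤ) = M) :
    {x : ↥(Subgroup.centralizer {Mu}) ⧸
        (Subgroup.zpowers Mu).subgroupOf (Subgroup.centralizer {Mu}) |
      IsOfFinOrder x}.Finite := by
  classical
  have hα0 : (0 : ℝ) < α := lt_trans one_pos hα
  set Γ := Subgroup.centralizer {Mu} with hΓ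
  set A : Matrix (Fin 3) (Fin 3) ℂ := M.map (Int.castRingHom ℂ) with hAdef
  have hAchar : A.charpoly = (X - C (α : ℂ)) * (X - C β) * (X - C ((starRingEnd ℂ) β)) := by
    rw [hAdef, Matrix.charpoly_map]; exact hchar
  set ev : Fin 3 → ℂ := ![(α : ℂ), β, (starRingEnd ℂ) β] with hevdef
  have hαβ : (α : ℂ) ≠ β := fun h => hβ (by rw [← h, Complex.ofReal_im])
  have hαβ' : (α : ℂ) ≠ (starRingEnd ℂ) β := by
    intro h
    have := congrArg Complex.im h
    rw [Complex.ofReal_im, Complex.conj_im] at this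
    exact hβ (by linarith)
  have hββ' : β ≠ (starRingEnd ℂ) β := by
    intro h
    have := congrArg Complex.im h
    rw [Complex.conj_im] at this
    exact hβ (by linarith)
  have hevinj : Function.Injective ev := by
    intro i j hij
    fin_cases i <;> fin_cases j <;> simp_all [hevdef] <;>
      first
        | rfl
        | exact absurd hij hαβ
        | exact absurd hij hαβ'
        | exact absurd hij hββ'
        | exact absurd hij.symm hαβ
        | exact absurd hij.symm hαβ'
        | exact absurd hij.symm hββ'
  have heig : ∀ i : Fin 3, ∃ w ≠ 0, A *ᵥ w = ev i • w := by
    intro i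
    apply exists_eigvec_aux
    fin_cases i <;> simp [hAchar, hevdef]
  choose v hv0 hvA using heig
  have hli : LinearIndependent ℂ v := by
    apply Module.End.eigenvectors_linearIndependent' (Matrix.mulVecLin A) ev hevinj v
    intro i
    exact ⟨Module.End.mem_eigenspace_iff.mpr (by rw [Matrix.mulVecLin_apply, hvA i]), hv0 i⟩
  set P : Matrix (Fin 3) (Fin 3) ℂ := (Matrix.of v)ᵀ with hPdef
  have hPu : IsUnit P := by
    rw [← Matrix.linearIndependent_cols_iff_isUnit]
    simpa [hPdef] using hli
  have hAP : A * P = P * Matrix.diagonal ev := by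
    ext i j
    rw [Matrix.mul_apply, Matrix.mul_diagonal]
    have := congrFun (hvA j) i
    simp only [Matrix.mulVec, dotProduct, Pi.smul_apply, smul_eq_mul] at this
    simpa [hPdef, Matrix.mul_apply, mul_comm] using this
  set Pinv := P⁻¹ with hPinvdef
  have hdetP : IsUnit P.det := (Matrix.isUnit_iff_isUnit_det P).mp hPu
  have hPl : Pinv * P = 1 := Matrix.nonsing_inv_mul P hdetP
  have hPr : P * Pinv = 1 := Matrix.mul_nonsing_inv P hdetP
  have hPP1 : ∀ X : Matrix (Fin 3) (Fin 3) ℂ, P * (Pinv * X) = X := by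
    intro X; rw [← Matrix.mul_assoc, hPr, Matrix.one_mul]
  have hPP2 : ∀ X : Matrix (Fin 3) (Fin 3) ℂ, Pinv * (P * X) = X := by
    intro X; rw [← Matrix.mul_assoc, hPl, Matrix.one_mul]
  have hdiagev : Pinv * A * P = Matrix.diagonal ev := by
    rw [Matrix.mul_assoc, hAP, ← Matrix.mul_assoc, hPl, Matrix.one_mul]
  set cmat : ↥Γ → Matrix (Fin 3) (Fin 3) ℂ :=
    fun y => ((y : GL (Fin 3) ℤ) : Matrix (Fin 3) (Fin 3) ℤ).map (Int.castRingHom ℂ)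
    with hcmatdef
  have hcmat_mul : ∀ y z : ↥Γ, cmat (y * z) = cmat y * cmat z := by
    intro y z
    exact Matrix.map_mul
  have hcmat_one : cmat (1 : ↥Γ) = 1 := by
    simp [hcmatdef]
  have hcomm : ∀ y : ↥Γ, A * cmat y = cmat y * A := by
    intro y
    have h1 : Mu * (y : GL (Fin 3) ℤ) = (y : GL (Fin 3) ℤ) * Mu :=
      Subgroup.mem_centralizer_iff.mp y.2 Mu (Set.mem_singleton Mu)
    have h2 : (M * ((y : GL (Fin 3) ℤ) : Matrix (Fin 3) (Fin 3) ℤ) : Matrix (Fin 3) (Fin 3) ℤ)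
        = ((y : GL (Fin 3) ℤ) : Matrix (Fin 3) (Fin 3) ℤ) * M := by
      rw [← hMu]
      exact congrArg Units.val h1
    have h3 := congrArg (fun m : Matrix (Fin 3) (Fin 3) ℤ => m.map (Int.castRingHom ℂ)) h2
    rw [Matrix.map_mul, Matrix.map_mul] at h3
    exact h3
  set d : ↥Γ → Fin 3 → ℂ := fun y i => (Pinv * cmat y * P) i i with hddef
  have hdiag : ∀ y : ↥Γ, Pinv * cmat y * P = Matrix.diagonal (d y) := by
    intro y
    apply diag_comm_aux ev hevinj
    rw [← hdiagev]
    simp only [Matrix.mul_assoc, hPP1, hPP2]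
    congr 1
    rw [← Matrix.mul_assoc, ← Matrix.mul_assoc, hcomm]
  have hfact : ∀ y : ↥Γ, cmat y = P * Matrix.diagonal (d y) * Pinv := by
    intro y
    rw [← hdiag y]
    simp only [Matrix.mul_assoc, hPr, Matrix.mul_one, hPP1, hPP2]
  have hd_mul : ∀ y z : ↥Γ, ∀ i, d (y * z) i = d y i * d z i := by
    intro y z i
    have h1 : Matrix.diagonal (d (y * z)) = Matrix.diagonal (fun i => d y i * d z i) := by
      rw [← Matrix.diagonal_mul_diagonal, ← hdiag y, ← hdiag z, ← hdiag (y * z), hcmat_mul]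
      simp only [Matrix.mul_assoc, hPP1, hPP2]
    have h2 := congrFun (congrFun h1 i) i
    simpa using h2
  have hd_one : ∀ i, d (1 : ↥Γ) i = 1 := by
    intro i
    show (Pinv * cmat 1 * P) i i = 1
    rw [hcmat_one, Matrix.mul_one, hPl, Matrix.one_apply_eq]
  have hd_inv : ∀ y : ↥Γ, ∀ i, d y⁻¹ i = (d y i)⁻¹ := by
    intro y i
    have h1 : d y i * d y⁻¹ i = 1 := by
      rw [← hd_mul, mul_inv_cancel]
      exact hd_one i
    exact eq_inv_of_mul_eq_one_right h1
  have hd_ne : ∀ y : ↥Γ, ∀ i, d y i ≠ 0 := by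
    intro y i
    have h1 : d y i * d y⁻¹ i = 1 := by
      rw [← hd_mul, mul_inv_cancel]
      exact hd_one i
    exact left_ne_zero_of_mul_eq_one h1
  have hd_pow : ∀ y : ↥Γ, ∀ p : ℕ, ∀ i, d (y ^ p) i = d y i ^ p := by
    intro y p i
    induction p with
    | zero => simpa using hd_one i
    | succ q ih => rw [pow_succ, hd_mul, ih, pow_succ]
  have hd_zpow : ∀ y : ↥Γ, ∀ p : ℤ, ∀ i, d (y ^ p) i = d y i ^ p := by
    intro y p i
    rcases p with p | p
    · rw [Int.ofNat_eq_coe, zpow_natCast, zpow_natCast, hd_pow]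
    · rw [zpow_negSucc, zpow_negSucc, hd_inv, hd_pow]
  have hMuΓ : Mu ∈ Γ := by
    rw [hΓ, Subgroup.mem_centralizer_iff]
    intro g hg
    rw [Set.mem_singleton_iff] at hg
    subst hg
    rfl
  set Mc : ↥Γ := ⟨Mu, hMuΓ⟩ with hMcdef
  have hcmatMc : cmat Mc = A := by
    simp [hcmatdef, hMcdef, hMu, hAdef]
  have hdMc : ∀ i, d Mc i = ev i := by
    intro i
    show (Pinv * cmat Mc * P) i i = ev i
    rw [hcmatMc, hdiagev, Matrix.diagonal_apply_eq]
  set b : ℝ := ‖β‖ with hbdef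
  have hβ0 : β ≠ 0 := fun h => hβ (by rw [h]; simp)
  have hb0 : 0 < b := by rw [hbdef]; exact norm_pos_iff.mpr hβ0
  have hdetA : A.det = 1 := by
    have h0 := RingHom.map_det (Int.castRingHom ℂ) M
    rw [RingHom.mapMatrix_apply] at h0
    rw [hAdef, ← h0, hdet]
    simp
  have hprod : α * b ^ 2 = 1 := by
    have h1 : A = P * Matrix.diagonal ev * Pinv := by
      have := hfact Mc
      rw [hcmatMc] at this
      have hdMc' : d Mc = ev := _root_.funext hdMc
      rw [this, hdMc']
    have h3 : Pinv.det * P.det = 1 := by rw [← Matrix.det_mul, hPl, Matrix.det_one]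
    have h2 : A.det = (Matrix.diagonal ev).det := by
      rw [h1, Matrix.det_mul, Matrix.det_mul]
      calc P.det * (Matrix.diagonal ev).det * Pinv.det
          = (Matrix.diagonal ev).det * (Pinv.det * P.det) := by ring
        _ = (Matrix.diagonal ev).det := by rw [h3, mul_one]
    rw [hdetA, Matrix.det_diagonal, Fin.prod_univ_three] at h2
    have h4 : ev 0 = (α : ℂ) := by simp [hevdef]
    have h5 : ev 1 = β := by simp [hevdef]
    have h6 : ev 2 = (starRingEnd ℂ) β := by simp [hevdef]
    rw [h4, h5, h6] at h2
    have h7 : (1 : ℂ) = ((α * b ^ 2 : ℝ) : ℂ) := by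
      rw [h2, mul_assoc, Complex.mul_conj, Complex.normSq_eq_norm_sq]
      push_cast
      rw [hbdef]
    exact_mod_cast h7.symm
  have hble : b ≤ 1 := by nlinarith
  set K : ℝ := ∑ i : Fin 3, ∑ j : Fin 3, ∑ l : Fin 3,
      ‖P i l‖ * ‖Pinv l j‖ with hKdef
  set Cc : ℝ := α * K with hCcdef
  set R : ℤ := ⌈Cc⌉ with hRdef
  set S : Set ↥Γ := {y | ∀ i j, ((y : GL (Fin 3) ℤ) : Matrix (Fin 3) (Fin 3) ℤ) i j ∈
      Set.Icc (-R) R} with hSdef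
  have hSfin : S.Finite := by
    have hfin2 : (Set.univ.pi fun _ : Fin 3 =>
        Set.univ.pi fun _ : Fin 3 => Set.Icc (-R) R).Finite :=
      Set.Finite.pi fun _ => Set.Finite.pi fun _ => Set.finite_Icc _ _
    have hinj : Function.Injective
        (fun y : ↥Γ => fun i j => ((y : GL (Fin 3) ℤ) : Matrix (Fin 3) (Fin 3) ℤ) i j) := by
      intro y z h
      apply Subtype.ext
      apply Units.ext
      apply Matrix.ext
      intro i j
      exact congrFun (congrFun h i) j
    have hSsub : S = (fun y : ↥Γ => fun i j =>
        ((y : GL (Fin 3) ℤ) : Matrix (Fin 3) (Fin 3) ℤ) i j) ⁻¹'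
        (Set.univ.pi fun _ : Fin 3 => Set.univ.pi fun _ : Fin 3 => Set.Icc (-R) R) := by
      ext y
      simp only [hSdef, Set.mem_setOf_eq, Set.mem_preimage, Set.mem_pi, Set.mem_univ,
        true_implies]
    rw [hSsub]
    exact Set.Finite.preimage hinj.injOn hfin2
  apply Set.Finite.subset (hSfin.image (QuotientGroup.mk))
  intro x hx
  obtain ⟨N, rfl⟩ := QuotientGroup.mk_surjective x
  obtain ⟨n, hn, hxn⟩ := isOfFinOrder_iff_pow_eq_one.mp hx
  have hNn : (N ^ n : ↥Γ) ∈ (Subgroup.zpowers Mu).subgroupOf Γ := by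
    apply (QuotientGroup.eq_one_iff _).mp
    have h1 : (QuotientGroup.mk (N ^ n) : ↥Γ ⧸ (Subgroup.zpowers Mu).subgroupOf Γ)
        = (QuotientGroup.mk N) ^ n := map_pow (QuotientGroup.mk' _) N n
    rw [h1]
    exact hxn
  rw [Subgroup.mem_subgroupOf] at hNn
  obtain ⟨k, hk⟩ := Subgroup.mem_zpowers_iff.mp hNn
  have hNk : N ^ n = Mc ^ k := by
    apply Subtype.ext
    push_cast
    exact hk.symm
  have heq : ∀ i, d N i ^ n = ev i ^ k := by
    intro i
    rw [← hd_pow, hNk, hd_zpow, hdMc]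
  set m : ℤ := ⌊(k : ℝ) / (n : ℝ)⌋ with hmdef
  set t : ℝ := (k : ℝ) / n - m with htdef
  have ht0 : 0 ≤ t := by
    rw [htdef]
    have := Int.floor_le ((k : ℝ) / n)
    rw [← hmdef] at this
    linarith
  have ht1 : t ≤ 1 := by
    rw [htdef]
    have := Int.lt_floor_add_one ((k : ℝ) / n)
    rw [← hmdef] at this
    linarith
  set y : ↥Γ := N * Mc ^ (-m) with hydef
  have hdy : ∀ i, d y i = d N i * ev i ^ (-m) := by
    intro i
    rw [hydef, hd_mul, hd_zpow, hdMc]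
  have habsy : ∀ i, ‖d y i‖ ≤ α := by
    intro i
    fin_cases i
    · -- eigenvalue α
      show ‖d y 0‖ ≤ α
      have he := heq 0
      have hev0 : ev 0 = (α : ℂ) := by simp [hevdef]
      rw [hev0] at he
      have ha0 : 0 < ‖d N 0‖ := norm_pos_iff.mpr (hd_ne N 0)
      have habs_eq : ‖d N 0‖ ^ n = α ^ k := by
        have := congrArg norm he
        rw [norm_pow, norm_zpow, Complex.norm_real, Real.norm_eq_abs, abs_of_pos hα0] at this
        exact this
      have h8 : ‖d y 0‖ = α ^ t := by
        rw [hdy 0, hev0, norm_mul, norm_zpow, Complex.norm_real, Real.norm_eq_abs, abs_of_pos hα0]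
        rw [htdef]
        exact key_rpow_aux hα0 ha0 hn habs_eq m
      rw [h8]
      calc α ^ t ≤ α ^ (1 : ℝ) := Real.rpow_le_rpow_of_exponent_le hα.le ht1
        _ = α := Real.rpow_one α
    · -- eigenvalue β
      show ‖d y 1‖ ≤ α
      have he := heq 1
      have hev1 : ev 1 = β := by simp [hevdef]
      rw [hev1] at he
      have ha0 : 0 < ‖d N 1‖ := norm_pos_iff.mpr (hd_ne N 1)
      have habs_eq : ‖d N 1‖ ^ n = b ^ k := by
        have := congrArg norm he
        rw [norm_pow, norm_zpow] at this
        exact this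
      have h8 : ‖d y 1‖ = b ^ t := by
        rw [hdy 1, hev1, norm_mul, norm_zpow, htdef]
        exact key_rpow_aux hb0 ha0 hn habs_eq m
      rw [h8]
      calc b ^ t ≤ 1 := Real.rpow_le_one hb0.le hble ht0
        _ ≤ α := hα.le
    · -- eigenvalue conj β
      show ‖d y 2‖ ≤ α
      have he := heq 2
      have hev2 : ev 2 = (starRingEnd ℂ) β := by simp [hevdef]
      rw [hev2] at he
      have ha0 : 0 < ‖d N 2‖ := norm_pos_iff.mpr (hd_ne N 2)
      have hconjabs : ‖(starRingEnd ℂ) β‖ = b := by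
        rw [hbdef]; exact Complex.norm_conj β
      have habs_eq : ‖d N 2‖ ^ n = b ^ k := by
        have := congrArg norm he
        rw [norm_pow, norm_zpow, hconjabs] at this
        exact this
      have h8 : ‖d y 2‖ = b ^ t := by
        rw [hdy 2, hev2, norm_mul, norm_zpow, hconjabs, htdef]
        exact key_rpow_aux hb0 ha0 hn habs_eq m
      rw [h8]
      calc b ^ t ≤ 1 := Real.rpow_le_one hb0.le hble ht0
        _ ≤ α := hα.le
  refine ⟨y, ?_, ?_⟩
  · -- y ∈ S : bounded entries
    have hmem : ∀ i j, ((y : GL (Fin 3) ℤ) : Matrix (Fin 3) (Fin 3) ℤ) i j ∈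
        Set.Icc (-R) R := by
      intro i j
      have hent : ‖cmat y i j‖ ≤ Cc := by
        rw [hfact y, hCcdef, hKdef]
        exact entry_bound_aux P Pinv (d y) α hα0.le habsy i j
      have hce : cmat y i j =
          ((((y : GL (Fin 3) ℤ) : Matrix (Fin 3) (Fin 3) ℤ) i j : ℤ) : ℂ) := rfl
      rw [hce] at hent
      rw [hRdef]
      exact int_entry_bound_aux _ Cc hent
    exact hmem
  · -- same coset
    have h11 : y⁻¹ * N = Mc ^ m := by
      rw [hydef]
      group
    symm
    rw [QuotientGroup.eq]
    show N⁻¹ * y ∈ _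
    have h12 : N⁻¹ * y = Mc ^ (-m) := by rw [hydef]; group
    rw [h12, Subgroup.mem_subgroupOf]
    have : ((Mc ^ (-m) : ↥Γ) : GL (Fin 3) ℤ) = Mu ^ (-m) := by push_cast; rfl
    rw [this]
    exact Subgroup.zpow_mem _ (Subgroup.mem_zpowers Mu) (-m)
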